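/- arXiv:2111.14635 — 3 statements merged into one kernel-verified Lean document; each statement's English description precedes it below -/
import Mathlib

section
/- Let N ≥ 1, let q : Fin N → ℝ be a prior distribution with q_i > 0 for all i and Σ_i q_i = 1, let U : Fin N → ℝ and β ∈ ℝ. Define the Gibbs distribution g_i = q_i·exp(β·U_i) / Σ_j q_j·exp(β·U_j). Then for every distribution p : Fin N → ℝ with p_i > 0 for all i, Σ_i p_i = 1, and Σ_i p_i·U_i = Σ_i g_i·U_i, one has Σ_i p_i·ln(p_i/q_i) ≥ Σ_i g_i·ln(g_i/q_i), with equality if and only if p = g. -/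
open Real

lemma kl_term_ge {p g : ℝ} (hp : 0 < p) (hg : 0 < g) :
    p - g ≤ p * log (p / g) := by
  have h := Real.log_le_sub_one_of_pos (x := g / p) (by positivity)
  have hlog : log (g / p) = - log (p / g) := by
    rw [← Real.log_inv]; congr 1; field_simp
  rw [hlog] at h
  have h2 := mul_le_mul_of_nonneg_left h hp.le
  rw [mul_sub, mul_one, mul_div_cancel₀ _ hp.ne'] at h2
  linarith

lemma kl_term_gt {p g : ℝ} (hp : 0 < p) (hg : 0 < g) (hne : p ≠ g) :
    p - g < p * log (p / g) := by
  have hne' : g / p ≠ 1 := by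
    intro h
    exact hne (by field_simp at h; linarith)
  have h := Real.log_lt_sub_one_of_pos (x := g / p) (by positivity) hne'
  have hlog : log (g / p) = - log (p / g) := by
    rw [← Real.log_inv]; congr 1; field_simp
  rw [hlog] at h
  have h2 := mul_lt_mul_of_pos_left h hp
  rw [mul_sub, mul_one, mul_div_cancel₀ _ hp.ne'] at h2
  linarith

lemma kl_nonneg {N : ℕ} (p g : Fin N → ℝ) (hp : ∀ i, 0 < p i) (hg : ∀ i, 0 < g i)
    (hps : ∑ i, p i = 1) (hgs : ∑ i, g i = 1) :
    0 ≤ ∑ i, p i * log (p i / g i) ∧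
      (∑ i, p i * log (p i / g i) = 0 ↔ p = g) := by
  have hle : ∀ i ∈ Finset.univ, p i - g i ≤ p i * log (p i / g i) := fun i _ =>
    kl_term_ge (hp i) (hg i)
  have hsum : ∑ i, (p i - g i) ≤ ∑ i, p i * log (p i / g i) :=
    Finset.sum_le_sum hle
  have hzero : ∑ i, (p i - g i) = 0 := by
    rw [Finset.sum_sub_distrib, hps, hgs]; ring
  constructor
  · linarith
  constructor
  · intro heq
    by_contra hne
    have : ∃ i, p i ≠ g i := by
      by_contra h
      push_neg at h
      exact hne (funext h)
    obtain ⟨i, hi⟩ := this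
    have hlt : ∑ j, (p j - g j) < ∑ j, p j * log (p j / g j) :=
      Finset.sum_lt_sum hle ⟨i, Finset.mem_univ i, kl_term_gt (hp i) (hg i) hi⟩
    rw [hzero, heq] at hlt
    exact lt_irrefl 0 hlt
  · intro h
    subst h
    apply Finset.sum_eq_zero
    intro i _
    rw [div_self (hg i).ne', Real.log_one, mul_zero]

/-- Theorem 2 (St. Petersburg paper): the Gibbs distribution
`g i = q i * exp (β * U i) / ∑ j, q j * exp (β * U j)` minimizes the
Kullback–Leibler information `∑ i, p i * log (p i / q i)` among all
distributions `p` with the same mean utility, with equality iff `p = g`. -/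
theorem gibbs_minimizes_KL (N : ℕ) (hN : 1 ≤ N)
    (q : Fin N → ℝ) (hq : ∀ i, 0 < q i) (hqsum : ∑ i, q i = 1)
    (U : Fin N → ℝ) (β : ℝ)
    (g : Fin N → ℝ)
    (hg : g = fun i => q i * exp (β * U i) / ∑ j, q j * exp (β * U j))
    (p : Fin N → ℝ) (hp : ∀ i, 0 < p i) (hpsum : ∑ i, p i = 1)
    (hmean : ∑ i, p i * U i = ∑ i, g i * U i) :
    ∑ i, g i * log (g i / q i) ≤ ∑ i, p i * log (p i / q i) ∧
      (∑ i, p i * log (p i / q i) = ∑ i, g i * log (g i / q i) ↔ p = g) := by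
  set Z : ℝ := ∑ j, q j * exp (β * U j) with hZ
  have hZpos : 0 < Z := by
    apply Finset.sum_pos
    · intro j _; exact mul_pos (hq j) (exp_pos _)
    · exact ⟨⟨0, hN⟩, Finset.mem_univ _⟩
  have hgpos : ∀ i, 0 < g i := by
    intro i; rw [hg]; dsimp; exact div_pos (mul_pos (hq i) (exp_pos _)) hZpos
  have hgsum : ∑ i, g i = 1 := by
    rw [hg]
    dsimp
    rw [← Finset.sum_div, ← hZ, div_self hZpos.ne']
  -- log (g i / q i) = β * U i - log Z
  have hlogg : ∀ i, log (g i / q i) = β * U i - log Z := by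
    intro i
    have : g i / q i = exp (β * U i) / Z := by
      rw [hg]; dsimp
      rw [div_right_comm, mul_div_cancel_left₀ _ (hq i).ne']
    rw [this, Real.log_div (exp_ne_zero _) hZpos.ne', Real.log_exp]
  -- key identity: ∑ p log(g/q) = ∑ g log(g/q)
  have hkey : ∑ i, p i * log (g i / q i) = ∑ i, g i * log (g i / q i) := by
    simp only [hlogg, mul_sub]
    rw [Finset.sum_sub_distrib, Finset.sum_sub_distrib,
      ← Finset.sum_mul, ← Finset.sum_mul, hpsum, hgsum]
    congr 1
    simp only [show ∀ i, p i * (β * U i) = β * (p i * U i) from fun i => by ring,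
      show ∀ i, g i * (β * U i) = β * (g i * U i) from fun i => by ring,
      ← Finset.mul_sum, hmean]
  -- decomposition
  have hdecomp : ∑ i, p i * log (p i / q i)
      = (∑ i, p i * log (p i / g i)) + ∑ i, g i * log (g i / q i) := by
    rw [← hkey, ← Finset.sum_add_distrib]
    apply Finset.sum_congr rfl
    intro i _
    have harg : p i / g i * (g i / q i) = p i / q i := by
      rw [div_mul_div_comm, mul_comm (p i) (g i),
        mul_div_mul_left _ _ (hgpos i).ne']
    rw [← mul_add, ← Real.log_mul (div_pos (hp i) (hgpos i)).ne'
      (div_pos (hgpos i) (hq i)).ne', harg]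
  obtain ⟨h1, h2⟩ := kl_nonneg p g hp hgpos hpsum hgsum
  constructor
  · rw [hdecomp]; linarith
  · rw [hdecomp]
    constructor
    · intro h
      exact h2.mp (by linarith)
    · intro h
      rw [h2.mpr h]; ring
end

section
/- The equation √2·x·sinh(x/2) = 1 has exactly one solution x > 0, and this solution lies in the open interval (1.15, 1.16). -/
open Real

lemma exp_ub_575 : Real.exp 0.575 ≤ 1.778 := by
  have h := Real.exp_bound' (x := 0.575) (by norm_num) (by norm_num) (n := 5) (by norm_num)
  refine h.trans ?_
  norm_num [Finset.sum_range_succ, Nat.factorial]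

lemma exp_lb_58 : (1.786 : ℝ) ≤ Real.exp 0.58 := by
  have h := Real.sum_le_exp_of_nonneg (x := 0.58) (by norm_num) 7
  refine le_trans ?_ h
  norm_num [Finset.sum_range_succ, Nat.factorial]

lemma sqrt2_ub : Real.sqrt 2 < 1.41422 := by
  rw [show (1.41422:ℝ) = Real.sqrt (1.41422^2) by rw [Real.sqrt_sq]; norm_num]
  exact Real.sqrt_lt_sqrt (by norm_num) (by norm_num)

lemma sqrt2_lb : (1.41421 : ℝ) < Real.sqrt 2 := by
  rw [show (1.41421:ℝ) = Real.sqrt (1.41421^2) by rw [Real.sqrt_sq]; norm_num]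
  exact Real.sqrt_lt_sqrt (by norm_num) (by norm_num)

lemma f_lt_at_115 : Real.sqrt 2 * 1.15 * Real.sinh (1.15 / 2) < 1 := by
  have hub := exp_ub_575
  have hsinh : Real.sinh (1.15/2) ≤ (1.778 - 1/1.778)/2 := by
    rw [show (1.15:ℝ)/2 = 0.575 by norm_num, Real.sinh_eq, Real.exp_neg]
    have h1 : (1.778:ℝ)⁻¹ ≤ (Real.exp 0.575)⁻¹ := by
      apply inv_anti₀ (by positivity) hub
    have : (1:ℝ)/1.778 = (1.778:ℝ)⁻¹ := by norm_num
    rw [this]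
    linarith
  have hs2 := sqrt2_ub
  have hsnn : 0 ≤ Real.sinh (1.15/2) := Real.sinh_nonneg_iff.2 (by norm_num)
  nlinarith [Real.sqrt_nonneg 2]

lemma f_gt_at_116 : 1 < Real.sqrt 2 * 1.16 * Real.sinh (1.16 / 2) := by
  have hlb := exp_lb_58
  have hsinh : (1.786 - 1/1.786)/2 ≤ Real.sinh (1.16/2) := by
    rw [show (1.16:ℝ)/2 = 0.58 by norm_num, Real.sinh_eq, Real.exp_neg]
    have h1 : (Real.exp 0.58)⁻¹ ≤ (1.786:ℝ)⁻¹ := by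
      apply inv_anti₀ (by norm_num) hlb
    have : (1:ℝ)/1.786 = (1.786:ℝ)⁻¹ := by norm_num
    rw [this]
    linarith
  have hs2 := sqrt2_lb
  nlinarith

lemma f_strictMono : StrictMonoOn (fun x : ℝ => Real.sqrt 2 * x * Real.sinh (x / 2)) (Set.Ici 0) := by
  intro x hx y _ hxy
  simp only
  have h1 : Real.sqrt 2 * x < Real.sqrt 2 * y :=
    mul_lt_mul_of_pos_left hxy (Real.sqrt_pos.2 (by norm_num))
  have h2 : Real.sinh (x/2) < Real.sinh (y/2) := Real.sinh_lt_sinh.2 (by linarith)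
  exact mul_lt_mul'' h1 h2 (mul_nonneg (Real.sqrt_nonneg 2) hx) (Real.sinh_nonneg_iff.2 (by linarith [Set.mem_Ici.1 hx]))

/-- The disbelief-parameter equation `√2 · x · sinh (x/2) = 1` has exactly one
positive solution, and this solution lies in the interval `(1.15, 1.16)`. -/
theorem disbelief_equation_unique_root :
    (∃! x : ℝ, 0 < x ∧ Real.sqrt 2 * x * sinh (x / 2) = 1) ∧
    ∀ x : ℝ, 0 < x → Real.sqrt 2 * x * sinh (x / 2) = 1 →
      1.15 < x ∧ x < 1.16 := by
  set f : ℝ → ℝ := fun x => Real.sqrt 2 * x * Real.sinh (x / 2) with hf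
  have hcont : ContinuousOn f (Set.Icc 1.15 1.16) := by
    fun_prop
  have hivt := intermediate_value_Ioo (a := (1.15:ℝ)) (b := 1.16) (by norm_num) hcont
  have h1 : (1:ℝ) ∈ Set.Ioo (f 1.15) (f 1.16) := ⟨f_lt_at_115, f_gt_at_116⟩
  obtain ⟨x, hxmem, hxeq⟩ := hivt h1
  have hxpos : 0 < x := by have := hxmem.1; norm_num at this ⊢; linarith
  have key : ∀ y : ℝ, 0 < y → f y = 1 → 1.15 < y ∧ y < 1.16 := by
    intro y hy hyeq
    constructor
    · by_contra h
      push_neg at h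
      have : f y ≤ f 1.15 := by
        rcases eq_or_lt_of_le h with h' | h'
        · rw [h']
        · exact (f_strictMono (Set.mem_Ici.2 hy.le) (Set.mem_Ici.2 (by norm_num)) h').le
      have h2 : f 1.15 < 1 := f_lt_at_115
      linarith
    · by_contra h
      push_neg at h
      have : f 1.16 ≤ f y := by
        rcases eq_or_lt_of_le h with h' | h'
        · rw [h']
        · exact (f_strictMono (Set.mem_Ici.2 (by norm_num)) (Set.mem_Ici.2 hy.le) h').le
      have h2 : 1 < f 1.16 := f_gt_at_116
      linarith
  refine ⟨⟨x, ⟨hxpos, hxeq⟩, ?_⟩, fun y hy hyeq => key y hy hyeq⟩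
  intro y ⟨hy, hyeq⟩
  exact f_strictMono.injOn (Set.mem_Ici.2 hy.le) (Set.mem_Ici.2 hxpos.le)
    ((hyeq.trans hxeq.symm : f y = f x))
end

section
/- Let b > 0. Then there exists a unique x > 0 satisfying (1 + x)·ln(1 + x) = 1/b, and this x is the strict global maximizer of g(x) = ln(1 + x)·exp(−b·x) over (0, ∞): for every y > 0 with y ≠ x, ln(1 + y)·exp(−b·y) < ln(1 + x)·exp(−b·x). -/
open Real Set

private lemma F_cont : ContinuousOn (fun y : ℝ => (1 + y) * log (1 + y)) (Ici 0) := by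
  apply ContinuousOn.mul (by fun_prop)
  apply ContinuousOn.log (by fun_prop)
  intro x hx
  have : (0:ℝ) ≤ x := hx
  nlinarith

private lemma F_strictMono : StrictMonoOn (fun y : ℝ => (1 + y) * log (1 + y)) (Ici 0) := by
  apply strictMonoOn_of_deriv_pos (convex_Ici 0) F_cont
  intro x hx
  simp only [interior_Ici, mem_Ioi] at hx
  have hx1 : (0:ℝ) < 1 + x := by linarith
  have h1 : HasDerivAt (fun y : ℝ => 1 + y) 1 x := (hasDerivAt_id x).const_add 1
  have h2 : HasDerivAt (fun y : ℝ => log (1 + y)) (1 / (1 + x)) x := by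
    simpa using h1.log hx1.ne'
  have hd : HasDerivAt (fun y : ℝ => (1 + y) * log (1 + y)) (log (1 + x) + 1) x := by
    have : HasDerivAt (fun y : ℝ => (1 + y) * log (1 + y)) (1 * log (1 + x) + (1 + x) * (1 / (1 + x))) x := h1.fun_mul h2
    convert this using 1
    rw [mul_one_div_cancel hx1.ne']; ring
  rw [hd.deriv]
  have : 0 < log (1 + x) := Real.log_pos (by linarith)
  linarith

private lemma g_hasDeriv (b x : ℝ) (hx : (0:ℝ) < 1 + x) :
    HasDerivAt (fun y : ℝ => log (1 + y) * exp (-b * y))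
      (((1 - b * ((1 + x) * log (1 + x))) / (1 + x)) * exp (-b * x)) x := by
  have h1 : HasDerivAt (fun y : ℝ => log (1 + y)) (1 / (1 + x)) x := by
    simpa using ((hasDerivAt_id x).const_add 1).log hx.ne'
  have h2 : HasDerivAt (fun y : ℝ => exp (-b * y)) (-b * exp (-b * x)) x := by
    have h3 : HasDerivAt (fun y : ℝ => -b * y) (-b) x := by
      simpa using (hasDerivAt_id x).const_mul (-b)
    simpa [mul_comm] using h3.exp
  have : HasDerivAt (fun y : ℝ => log (1 + y) * exp (-b * y)) (1 / (1 + x) * exp (-b * x) + log (1 + x) * (-b * exp (-b * x))) x := h1.fun_mul h2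
  convert this using 1
  field_simp
  ring

private lemma g_cont (b : ℝ) :
    ContinuousOn (fun y : ℝ => log (1 + y) * exp (-b * y)) (Ici 0) := by
  apply ContinuousOn.mul
  · apply ContinuousOn.log (by fun_prop)
    intro x hx
    have : (0:ℝ) ≤ x := hx
    nlinarith
  · fun_prop

/-- Logarithmic prior (St. Petersburg paper, Sec. 8): for `b > 0`, the equation
`(1 + x) ln (1 + x) = 1/b` has a unique positive solution, which is the strict
global maximizer of `g(x) = ln(1 + x) e^{-b x}` on `(0, ∞)`. -/
theorem log_prior_optimum (b : ℝ) (hb : 0 < b) :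
    (∃! x : ℝ, 0 < x ∧ (1 + x) * log (1 + x) = 1 / b) ∧
    ∀ x : ℝ, 0 < x → (1 + x) * log (1 + x) = 1 / b →
      ∀ y : ℝ, 0 < y → y ≠ x →
        log (1 + y) * exp (-b * y) < log (1 + x) * exp (-b * x) := by
  have hb1 : (0:ℝ) < 1 / b := by positivity
  constructor
  · have hc0 : (0:ℝ) ≤ exp (1 / b) - 1 := by
      nlinarith [Real.one_le_exp hb1.le]
    have hcge : 1 / b ≤ (1 + (exp (1 / b) - 1)) * log (1 + (exp (1 / b) - 1)) := by
      have h : (1 : ℝ) + (exp (1 / b) - 1) = exp (1 / b) := by ring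
      rw [h, Real.log_exp]
      nlinarith [Real.one_le_exp hb1.le]
    have hmem : (1 / b) ∈ Icc ((1 + (0:ℝ)) * log (1 + 0))
        ((1 + (exp (1 / b) - 1)) * log (1 + (exp (1 / b) - 1))) := by
      refine ⟨?_, hcge⟩
      simp
      positivity
    obtain ⟨x, hxmem, hxeq⟩ :=
      intermediate_value_Icc hc0 (F_cont.mono Icc_subset_Ici_self) hmem
    have hx0 : 0 < x := by
      rcases lt_or_eq_of_le hxmem.1 with h | h
      · exact h
      · exfalso
        rw [← h] at hxeq
        simp at hxeq
        linarith
    refine ⟨x, ⟨hx0, hxeq⟩, ?_⟩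
    rintro y ⟨hy0, hyeq⟩
    exact F_strictMono.injOn hy0.le hx0.le (by show (1+y)*log (1+y) = (1+x)*log (1+x); rw [hyeq]; exact hxeq.symm)
  · intro x hx0 hFx y hy0 hyx
    rcases lt_or_gt_of_ne hyx with hlt | hgt
    · -- y < x : use strict monotonicity on [0, x]
      have hmono : StrictMonoOn (fun y : ℝ => log (1 + y) * exp (-b * y)) (Icc 0 x) := by
        apply strictMonoOn_of_deriv_pos (convex_Icc 0 x)
          ((g_cont b).mono (Icc_subset_Ici_self))
        intro t ht
        rw [interior_Icc] at ht
        have ht1 : (0:ℝ) < 1 + t := by linarith [ht.1]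
        rw [(g_hasDeriv b t ht1).deriv]
        have hFlt : (1 + t) * log (1 + t) < 1 / b :=
          hFx ▸ F_strictMono ht.1.le hx0.le ht.2
        have hlt1 : b * ((1 + t) * log (1 + t)) < 1 := by
          rw [lt_div_iff₀ hb] at hFlt
          linarith
        have h1 : 0 < 1 - b * ((1 + t) * log (1 + t)) := by linarith
        positivity
      exact hmono ⟨hy0.le, hlt.le⟩ ⟨le_refl 0 |>.trans hx0.le, le_refl x⟩ hlt
    · -- y > x : use strict antitonicity on [x, ∞)
      have hanti : StrictAntiOn (fun y : ℝ => log (1 + y) * exp (-b * y)) (Ici x) := by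
        apply strictAntiOn_of_deriv_neg (convex_Ici x)
          ((g_cont b).mono (Ici_subset_Ici.mpr hx0.le))
        intro t ht
        rw [interior_Ici, mem_Ioi] at ht
        have ht1 : (0:ℝ) < 1 + t := by linarith
        rw [(g_hasDeriv b t ht1).deriv]
        have hFgt : 1 / b < (1 + t) * log (1 + t) :=
          hFx ▸ F_strictMono hx0.le (hx0.trans ht).le ht
        have hgt1 : 1 < b * ((1 + t) * log (1 + t)) := by
          rw [div_lt_iff₀ hb] at hFgt
          linarith
        have h1 : 1 - b * ((1 + t) * log (1 + t)) < 0 := by linarith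
        have := exp_pos (-b * t)
        have hq : (1 - b * ((1 + t) * log (1 + t))) / (1 + t) < 0 := div_neg_of_neg_of_pos h1 ht1
        exact mul_neg_of_neg_of_pos hq this
      exact hanti (self_mem_Ici) (le_of_lt hgt) hgt
end
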